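/- With the setup described in the context, for every y ∈ (Kˣ)^k the following are equivalent: (i) there exists t ∈ G such that (x(y)_i)^q = t_i·x(y)_i in K for all i ∈ {1,…,r}; (ii) every coordinate of y^{L2} lies in the image of F under the inclusion F ⊆ K. (Paper: Lemma 3.9 'repTQrat': a v-normalized representative defines an F_q-rational point of the torus T_Q if and only if its L2-power has all coordinates in F_q*.) -/

import Mathlib

def firstRows {r N : ℕ} (hNr : N ≤ r) (A : Matrix (Fin r) (Fin N) ℤ) :
    Matrix (Fin N) (Fin N) ℤ :=
  Matrix.of fun i j => A ⟨(i : ℕ), by have := i.isLt; omega⟩ j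

def lowerRight {N k : ℕ} (hkN : k ≤ N) (H : Matrix (Fin N) (Fin N) ℤ) :
    Matrix (Fin k) (Fin k) ℤ :=
  Matrix.of fun i j =>
    H ⟨N - k + (i : ℕ), by have := i.isLt; omega⟩
      ⟨N - k + (j : ℕ), by have := j.isLt; omega⟩

def xvec {K : Type*} [Field K] {k N r : ℕ} (hkN : k ≤ N) (hNr : N ≤ r)
    (y : Fin k → Kˣ) : Fin r → K :=
  fun i =>
    if h1 : (i : ℕ) < N - k then 0
    else if h2 : (i : ℕ) < N then (y ⟨(i : ℕ) - (N - k), by omega⟩ : K)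
    else 1

section helpers
open Finset

private lemma zpow_sum' {G : Type*} [CommGroup G] (a : G) {ι : Type*} (s : Finset ι) (f : ι → ℤ) :
    a ^ (∑ i ∈ s, f i) = ∏ i ∈ s, a ^ f i := by
  induction s using Finset.cons_induction with
  | empty => simp
  | cons i s hi ih => rw [Finset.sum_cons, Finset.prod_cons, zpow_add, ih]

private lemma prod_mulT {G : Type*} [CommGroup G] {N : ℕ} (u : Fin N → G)
    (M T : Matrix (Fin N) (Fin N) ℤ) (j : Fin N) :
    ∏ i, u i ^ (M * T) i j = ∏ l, (∏ i, u i ^ M i l) ^ T l j := by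
  calc ∏ i, u i ^ (M * T) i j = ∏ i, ∏ l, u i ^ (M i l * T l j) := by
        refine Finset.prod_congr rfl fun i _ => ?_
        rw [Matrix.mul_apply, zpow_sum']
    _ = ∏ l, ∏ i, u i ^ (M i l * T l j) := Finset.prod_comm
    _ = ∏ l, (∏ i, u i ^ M i l) ^ T l j := by
        refine Finset.prod_congr rfl fun l _ => ?_
        rw [← Finset.prod_zpow]
        exact Finset.prod_congr rfl fun i _ => zpow_mul _ _ _

private lemma prod_eq_one_mulT {G : Type*} [CommGroup G] {N : ℕ} (u : Fin N → G)
    (M T : Matrix (Fin N) (Fin N) ℤ)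
    (h : ∀ j, ∏ i, u i ^ M i j = 1) (j : Fin N) : ∏ i, u i ^ (M * T) i j = 1 := by
  rw [prod_mulT]; simp [h]

private lemma prod_reindex {M : Type*} [CommMonoid M] {a b : ℕ} (e : Fin a → Fin b)
    (he : Function.Injective e) (f : Fin b → M) (hf : ∀ i, (∀ x, e x ≠ i) → f i = 1) :
    ∏ i, f i = ∏ x, f (e x) := by
  rw [← Finset.prod_image (fun x _ y _ h => he h)]
  refine (Finset.prod_subset (Finset.subset_univ _) fun i _ hi => hf i fun x hx => ?_).symm
  exact hi (Finset.mem_image.2 ⟨x, Finset.mem_univ x, hx⟩)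

private lemma exists_zpow_eq {K : Type*} [Field K] [IsAlgClosed K] (a : Kˣ) (d : ℤ)
    (hd : d ≠ 0) : ∃ b : Kˣ, b ^ d = a := by
  have hnat : ∀ (c : Kˣ) (n : ℕ), n ≠ 0 → ∃ b : Kˣ, b ^ (n : ℤ) = c := by
    intro c n hn
    obtain ⟨z, hz⟩ := IsAlgClosed.exists_pow_nat_eq (c : K) (Nat.pos_of_ne_zero hn)
    have hz0 : z ≠ 0 := by
      intro h; rw [h, zero_pow hn] at hz; exact c.ne_zero hz.symm
    refine ⟨Units.mk0 z hz0, Units.ext ?_⟩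
    rw [zpow_natCast]
    simpa using hz
  rcases lt_or_ge 0 d with hpos | hneg
  · obtain ⟨b, hb⟩ := hnat a d.toNat (by omega)
    exact ⟨b, by rwa [Int.toNat_of_nonneg hpos.le] at hb⟩
  · obtain ⟨b, hb⟩ := hnat a⁻¹ (-d).toNat (by omega)
    rw [Int.toNat_of_nonneg (by omega)] at hb
    refine ⟨b, ?_⟩
    have : (b ^ d)⁻¹ = a⁻¹ := by rw [← zpow_neg]; exact hb
    exact inv_injective this

private lemma unit_pow_card_iff {K : Type*} [Field K] (z t : Kˣ) {q : ℕ} (hq : 0 < q) :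
    (z : K) ^ q = (t : K) * z ↔ t = z ^ (q - 1) := by
  have h1 : ((z ^ q : Kˣ) : K) = (z : K) ^ q := Units.val_pow_eq_pow_val z q
  have h2 : ((t * z : Kˣ) : K) = (t : K) * z := rfl
  rw [← h1, ← h2, Units.val_inj]
  constructor
  · intro h
    have h3 : z ^ (q - 1) * z = t * z := by rw [← pow_succ, Nat.sub_add_cancel hq, h]
    exact (mul_right_cancel h3).symm
  · rintro rfl; rw [← pow_succ, Nat.sub_add_cancel hq]

private lemma mem_range_iff_pow_card {F K : Type*} [Field F] [Fintype F] [Field K]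
    [Algebra F K] (z : K) :
    z ∈ Set.range (algebraMap F K) ↔ z ^ Fintype.card F = z := by
  classical
  set q := Fintype.card F with hq
  have hq1 : 1 < q := Fintype.one_lt_card
  constructor
  · rintro ⟨a, rfl⟩; rw [← map_pow, FiniteField.pow_card]
  · intro hz
    set f : Polynomial K := Polynomial.X ^ q - Polynomial.X with hf
    have hf0 : f ≠ 0 := FiniteField.X_pow_card_sub_X_ne_zero K hq1
    have hdeg : f.natDegree = q := FiniteField.X_pow_card_sub_X_natDegree_eq K hq1
    set S : Finset K := Finset.univ.image (algebraMap F K) with hS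
    have hScard : S.card = q := by
      rw [hS, Finset.card_image_of_injective _ (algebraMap F K).injective, Finset.card_univ]
    have hroot : ∀ x : K, x ^ q = x → x ∈ f.roots.toFinset := by
      intro x hx
      rw [Multiset.mem_toFinset, Polynomial.mem_roots hf0]
      simp [hf, Polynomial.IsRoot, sub_eq_zero, hx]
    have hSsub : S ⊆ f.roots.toFinset := by
      intro x hx
      rw [hS, Finset.mem_image] at hx
      obtain ⟨a, -, rfl⟩ := hx
      exact hroot _ (by rw [← map_pow, FiniteField.pow_card])
    have hcard : f.roots.toFinset.card ≤ S.card := by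
      rw [hScard]
      calc f.roots.toFinset.card ≤ Multiset.card f.roots := Multiset.toFinset_card_le _
        _ ≤ f.natDegree := Polynomial.card_roots' f
        _ = q := hdeg
    have hEq : S = f.roots.toFinset := Finset.eq_of_subset_of_card_le hSsub hcard
    have : z ∈ S := by rw [hEq]; exact hroot z hz
    rw [hS, Finset.mem_image] at this
    obtain ⟨a, -, rfl⟩ := this
    exact ⟨a, rfl⟩

private lemma zpow_pow_comm {G : Type*} [CommGroup G] (g : G) (m : ℕ) (c : ℤ) :
    (g ^ m) ^ c = (g ^ c) ^ m := by
  rw [← zpow_natCast, ← zpow_mul, mul_comm, zpow_mul, zpow_natCast]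

end helpers

/-- Lemma 3.9 'repTQrat': the `v`-normalized tuple `x(y)`
represents an `F_q`-rational point (i.e. `x(y)^q = t · x(y)` for some `t ∈ G`)
iff every coordinate of `y^{L2}` lies in the image of `F` in `K`. -/
theorem stmt_5 {F K : Type*} [Field F] [Fintype F] [Field K] [Algebra F K]
    [IsAlgClosure F K] {k N r : ℕ}
    (hk : 0 < k) (hkN : k ≤ N) (hNr : N ≤ r)
    (A : Matrix (Fin r) (Fin N) ℤ)
    (T : Matrix (Fin N) (Fin N) ℤ) (hT : IsUnit T.det)
    (hlow : ∀ i j : Fin N, (i : ℕ) < (j : ℕ) → (firstRows hNr A * T) i j = 0)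
    (hdet : (firstRows hNr A).det ≠ 0)
    (hchar : ∀ p : ℕ, 0 < p → CharP K p → ¬ ((p : ℤ) ∣ (firstRows hNr A).det))
    (y : Fin k → Kˣ) :
    (∃ t : Fin r → Kˣ,
        (∀ j : Fin N, ∏ i : Fin r, t i ^ A i j = 1) ∧
        (∀ i : Fin r,
          (xvec hkN hNr y i) ^ Fintype.card F = (t i : K) * xvec hkN hNr y i))
      ↔ ∀ j : Fin k,
          ((∏ i : Fin k, y i ^ lowerRight hkN (firstRows hNr A * T) i j : Kˣ) : K)
            ∈ Set.range (algebraMap F K) := by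
  classical
  haveI : IsAlgClosed K := IsAlgClosure.isAlgClosed F
  set q := Fintype.card F with hqdef
  have hq0 : 0 < q := Fintype.card_pos
  set A' := firstRows hNr A with hA'
  set H := A' * T with hHdef
  -- diagonal entries of H are nonzero
  have hdetH : H.det ≠ 0 := by
    rw [hHdef, Matrix.det_mul]
    exact mul_ne_zero hdet hT.ne_zero
  have hdiag : ∀ i : Fin N, H i i ≠ 0 := by
    intro i hi
    apply hdetH
    rw [Matrix.det_of_lowerTriangular H (fun a b hab => hlow a b hab)]
    exact Finset.prod_eq_zero (Finset.mem_univ i) hi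
  -- embeddings
  set eN : Fin N → Fin r := Fin.castLE hNr with heN
  have heNinj : Function.Injective eN := Fin.castLE_injective hNr
  set ek : Fin k → Fin N := fun a => ⟨N - k + (a : ℕ), by omega⟩ with hek
  have hekinj : Function.Injective ek := by
    intro a b hab
    have : N - k + (a : ℕ) = N - k + (b : ℕ) := congrArg Fin.val hab
    exact Fin.ext (by omega)
  constructor
  · rintro ⟨t, ht1, ht2⟩ j
    -- t is 1 above N
    have htone : ∀ i : Fin r, N ≤ (i : ℕ) → t i = 1 := by
      intro i hi
      have h := ht2 i
      rw [show xvec hkN hNr y i = 1 by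
        simp only [xvec]; rw [dif_neg (by omega), dif_neg (by omega)]] at h
      simp only [one_pow, mul_one] at h
      exact Units.ext h.symm
    set u : Fin N → Kˣ := fun i => t (eN i) with hu
    have huA' : ∀ jN : Fin N, ∏ i : Fin N, u i ^ A' i jN = 1 := by
      intro jN
      have hre := prod_reindex eN heNinj (fun i => t i ^ A i jN) (fun i hi => by
        show t i ^ A i jN = 1
        have hNi : N ≤ (i : ℕ) := by
          by_contra h
          exact hi ⟨(i : ℕ), by omega⟩ (Fin.ext rfl)
        rw [htone i hNi, one_zpow])
      rw [← ht1 jN, hre]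
      rfl
    have huH : ∀ jN : Fin N, ∏ i : Fin N, u i ^ H i jN = 1 :=
      fun jN => prod_eq_one_mulT u A' T huA' jN
    -- the middle coordinates of t
    have hua : ∀ a : Fin k, u (ek a) = y a ^ (q - 1) := by
      intro a
      have h := ht2 (eN (ek a))
      have hval : ((eN (ek a) : Fin r) : ℕ) = N - k + (a : ℕ) := rfl
      rw [show xvec hkN hNr y (eN (ek a)) = (y a : K) by
        simp only [xvec, hval]
        rw [dif_neg (by omega), dif_pos (by omega)]
        congr 1
        exact congrArg y
          (Fin.ext (show N - k + (a : ℕ) - (N - k) = (a : ℕ) by omega))] at h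
      exact (unit_pow_card_iff (y a) _ hq0).mp h
    -- column N-k+j
    set jN : Fin N := ek j with hjN
    have hsplit : ∏ i : Fin N, u i ^ H i jN = ∏ a : Fin k, u (ek a) ^ H (ek a) jN :=
      prod_reindex ek hekinj (fun i => u i ^ H i jN) (fun i hi => by
        show u i ^ H i jN = 1
        have hik : (i : ℕ) < N - k := by
          by_contra h
          exact hi ⟨(i : ℕ) - (N - k), by omega⟩
            (Fin.ext (show N - k + ((i : ℕ) - (N - k)) = (i : ℕ) by omega))
        rw [hlow i jN (show (i : ℕ) < N - k + (j : ℕ) by omega), zpow_zero])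
    have hP : (∏ a : Fin k, y a ^ lowerRight hkN H a j) ^ (q - 1) = 1 := by
      rw [← Finset.prod_pow, ← huH jN, hsplit]
      refine Finset.prod_congr rfl fun a _ => ?_
      rw [hua a, zpow_pow_comm]
      rfl
    rw [mem_range_iff_pow_card]
    set P : Kˣ := ∏ a : Fin k, y a ^ lowerRight hkN H a j with hPdef
    have : P ^ q = P := by
      conv_lhs => rw [show q = (q - 1) + 1 from (Nat.sub_add_cancel hq0).symm]
      rw [pow_succ, hP, one_mul]
    calc (P : K) ^ q = ((P ^ q : Kˣ) : K) := (Units.val_pow_eq_pow_val P q).symm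
      _ = (P : K) := by rw [this]
  · intro hy
    -- the coordinates of y ^ L2 are (q-1)-th roots of unity
    have hP : ∀ j : Fin k, (∏ a : Fin k, y a ^ lowerRight hkN H a j) ^ (q - 1) = 1 := by
      intro j
      set P : Kˣ := ∏ a : Fin k, y a ^ lowerRight hkN H a j with hPdef
      have h := (mem_range_iff_pow_card (P : K)).mp (hy j)
      have hPq : P ^ q = P := Units.ext (by rw [Units.val_pow_eq_pow_val]; exact h)
      have h2 : P ^ (q - 1) * P = 1 * P := by
        rw [← pow_succ, Nat.sub_add_cancel hq0, hPq, one_mul]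
      exact mul_right_cancel h2
    -- the fixed vector v
    set v : Fin N → Kˣ := fun i =>
      if h : (i : ℕ) < N - k then 1 else (y ⟨(i : ℕ) - (N - k), by omega⟩) ^ (q - 1) with hv
    have hvk : ∀ a : Fin k, v (ek a) = y a ^ (q - 1) := by
      intro a
      simp only [hv]
      rw [dif_neg (show ¬ (N - k + (a : ℕ) < N - k) by omega)]
      congr 2
      exact Fin.ext (show N - k + (a : ℕ) - (N - k) = (a : ℕ) by omega)
    have hcols : ∀ jN : Fin N, N - k ≤ (jN : ℕ) → ∏ i : Fin N, v i ^ H i jN = 1 := by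
      intro jN hjN
      set j : Fin k := ⟨(jN : ℕ) - (N - k), by omega⟩ with hj
      have hjNeq : ek j = jN :=
        Fin.ext (show N - k + ((jN : ℕ) - (N - k)) = (jN : ℕ) by omega)
      rw [← hjNeq]
      rw [prod_reindex ek hekinj (fun i => v i ^ H i (ek j)) (fun i hi => by
        show v i ^ H i (ek j) = 1
        have hik : (i : ℕ) < N - k := by
          by_contra h
          exact hi ⟨(i : ℕ) - (N - k), by omega⟩
            (Fin.ext (show N - k + ((i : ℕ) - (N - k)) = (i : ℕ) by omega))
        rw [hlow i (ek j) (show (i : ℕ) < N - k + (j : ℕ) by omega), zpow_zero])]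
      rw [← hP j, ← Finset.prod_pow]
      refine Finset.prod_congr rfl fun a _ => ?_
      rw [hvk a, zpow_pow_comm]
      rfl
    -- downward induction filling in the free coordinates
    have key : ∀ m : ℕ, ∃ u : Fin N → Kˣ,
        (∀ i : Fin N, N - k ≤ (i : ℕ) → u i = v i) ∧
        (∀ jN : Fin N, N - k - m ≤ (jN : ℕ) → ∏ i : Fin N, u i ^ H i jN = 1) := by
      intro m
      induction m with
      | zero => exact ⟨v, fun _ _ => rfl, fun jN hjN => hcols jN (by omega)⟩
      | succ m ih =>
        obtain ⟨u, hu1, hu2⟩ := ih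
        rcases Nat.lt_or_ge m (N - k) with hm | hm
        · set j0 : Fin N := ⟨N - k - m - 1, by omega⟩ with hj0
          obtain ⟨b, hb⟩ := exists_zpow_eq
            ((∏ i ∈ Finset.univ.erase j0, u i ^ H i j0)⁻¹) (H j0 j0) (hdiag j0)
          refine ⟨Function.update u j0 b, fun i hi => ?_, fun jN hjN => ?_⟩
          · rw [Function.update_of_ne (by
              intro h
              have : (i : ℕ) = N - k - m - 1 := by rw [h]
              omega) , hu1 i hi]
          · rcases eq_or_ne jN j0 with heq | hne
            · rw [heq]
              rw [← Finset.mul_prod_erase Finset.univ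
                (fun i => Function.update u j0 b i ^ H i j0) (Finset.mem_univ j0)]
              have herase : ∏ i ∈ Finset.univ.erase j0, Function.update u j0 b i ^ H i j0
                  = ∏ i ∈ Finset.univ.erase j0, u i ^ H i j0 :=
                Finset.prod_congr rfl fun i hi =>
                  by rw [Function.update_of_ne (Finset.ne_of_mem_erase hi)]
              rw [herase, Function.update_self, hb, inv_mul_cancel]
            · have hgt : N - k - m ≤ (jN : ℕ) := by
                have : (jN : ℕ) ≠ N - k - m - 1 := fun h => hne (Fin.ext h)
                omega
              have : ∏ i : Fin N, Function.update u j0 b i ^ H i jN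
                  = ∏ i : Fin N, u i ^ H i jN := by
                refine Finset.prod_congr rfl fun i _ => ?_
                rcases eq_or_ne i j0 with heq' | hne'
                · rw [heq', Function.update_self,
                    hlow j0 jN (show (j0 : ℕ) < (jN : ℕ) by
                      show N - k - m - 1 < (jN : ℕ); omega), zpow_zero, zpow_zero]
                · rw [Function.update_of_ne hne']
              rw [this]
              exact hu2 jN hgt
        · exact ⟨u, hu1, fun jN hjN => hu2 jN (by omega)⟩
    obtain ⟨u, hu1, hu2⟩ := key (N - k)
    have huH : ∀ jN : Fin N, ∏ i : Fin N, u i ^ H i jN = 1 :=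
      fun jN => hu2 jN (by omega)
    have huA' : ∀ jN : Fin N, ∏ i : Fin N, u i ^ A' i jN = 1 := by
      have hA'eq : A' = H * T⁻¹ := by
        rw [hHdef, Matrix.mul_assoc, Matrix.mul_nonsing_inv T hT, Matrix.mul_one]
      intro jN
      rw [hA'eq]
      exact prod_eq_one_mulT u H T⁻¹ huH jN
    set t : Fin r → Kˣ := fun i => if h : (i : ℕ) < N then u ⟨(i : ℕ), h⟩ else 1 with ht
    refine ⟨t, fun jN => ?_, fun i => ?_⟩
    · rw [prod_reindex eN heNinj (fun i => t i ^ A i jN) (fun i hi => by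
        show t i ^ A i jN = 1
        have hNi : N ≤ (i : ℕ) := by
          by_contra h
          exact hi ⟨(i : ℕ), by omega⟩ (Fin.ext rfl)
        simp only [ht]
        rw [dif_neg (by omega), one_zpow])]
      refine Eq.trans ?_ (huA' jN)
      refine Finset.prod_congr rfl fun x _ => ?_
      show t (eN x) ^ A (eN x) jN = u x ^ A' x jN
      simp only [ht]
      rw [dif_pos (show ((eN x : Fin r) : ℕ) < N from x.isLt)]
      rfl
    · simp only [xvec]
      split_ifs with h1 h2
      · rw [zero_pow (by omega), mul_zero]
      · have hti : t i = y ⟨(i : ℕ) - (N - k), by omega⟩ ^ (q - 1) := by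
          simp only [ht]
          rw [dif_pos h2, hu1 ⟨(i : ℕ), h2⟩ (show N - k ≤ (i : ℕ) by omega)]
          simp only [hv]
          rw [dif_neg (show ¬ ((i : ℕ) < N - k) from h1)]
        rw [hti]
        exact (unit_pow_card_iff _ _ hq0).mpr rfl
      · have hti : t i = 1 := by simp only [ht]; rw [dif_neg (by omega)]
        rw [hti, one_pow, Units.val_one, mul_one]
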